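/- Let ζ, ζ_s, ζ_σ : ℝ → ℝ be increasing functions with ζ' of bounded variation on [−1, 2p−1], and let χ be the indicator of an interval [−1,x]. Then ∫_{−1}^{2p−1} |χ(ζ_σ(y))ζ_σ'(y) − χ(ζ_s(y))ζ_s'(y)| dy ≤ 2‖ζ_σ − ζ_s‖_∞·L + ∫_{−1}^{2p−1} |ζ_σ'(y) − ζ_s'(y)| dy, where L bounds the number of sign changes; in the setting of the paper (ζ_σ, ζ_s increasing with uniformly bounded derivative) the bound 2‖ζ_σ−ζ_s‖_∞ + ∫|ζ_σ' − ζ_s'| dy holds. -/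

import Mathlib

open MeasureTheory

section Helpers
open Set Filter Topology

-- deriv nonneg at interior points of monotonicity interval
lemma my_deriv_nonneg {a b y : ℝ} {g : ℝ → ℝ} (hd : DifferentiableAt ℝ g y)
    (hm : MonotoneOn g (Set.Icc a b)) (hy : y ∈ Set.Ioo a b) : 0 ≤ deriv g y := by
  have h1 : Tendsto (slope g y) (𝓝[>] y) (𝓝 (deriv g y)) :=
    (hasDerivAt_iff_tendsto_slope.mp hd.hasDerivAt).mono_left
      (nhdsWithin_mono _ (fun z hz => ne_of_gt hz))
  refine ge_of_tendsto h1 ?_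
  filter_upwards [Ioc_mem_nhdsGT hy.2] with z hz
  rw [slope_def_field]
  have h2 : g y ≤ g z := hm ⟨hy.1.le, hy.2.le⟩ ⟨hy.1.le.trans hz.1.le, hz.2⟩ hz.1.le
  have := hz.1
  exact div_nonneg (by linarith) (by linarith)

lemma key (a b : ℝ) (hab : a < b) (f g : ℝ → ℝ)
    (hf : ContDiff ℝ 1 f) (hg : ContDiff ℝ 1 g)
    (hfm : MonotoneOn f (Set.Icc a b)) (hgm : MonotoneOn g (Set.Icc a b))
    (c B : ℝ) (hB0 : 0 ≤ B) (hB : ∀ y ∈ Set.Icc a b, |f y - g y| ≤ B)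
    (D : Set ℝ) (hD1 : Set.Iio c ⊆ D) (hD2 : D ⊆ Set.Iic c) (hDm : MeasurableSet D) :
    ∫ y in Set.Icc a b,
      |D.indicator (fun _ => (1:ℝ)) (f y) - D.indicator (fun _ => (1:ℝ)) (g y)| * |deriv g y|
      ≤ B := by
  have hfc : Continuous f := hf.continuous
  have hgc : Continuous g := hg.continuous
  -- lower-set property of D
  have hlow : ∀ {u v : ℝ}, u ≤ v → v ∈ D → u ∈ D := by
    intro u v huv hv
    rcases lt_or_eq_of_le (huv.trans (hD2 hv)) with h | h
    · exact hD1 h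
    · have h2 : u = v := le_antisymm huv (by rw [h]; exact hD2 hv)
      rwa [h2]
  -- the tau construction, generic in h
  have tau_spec : ∀ h : ℝ → ℝ, Continuous h → MonotoneOn h (Set.Icc a b) →
      ∃ τ, τ ∈ Set.Icc a b ∧ (∀ y ∈ Set.Icc a b, h y ∈ D → y ≤ τ) ∧
        (∀ y ∈ Set.Icc a b, a < y → y < τ → h y ∈ D) := by
    intro h hc hm
    set S := insert a {y | y ∈ Set.Icc a b ∧ h y ∈ D} with hS
    have hSb : S ⊆ Set.Icc a b := by
      rintro z (rfl | hz)
      · exact ⟨le_rfl, hab.le⟩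
      · exact hz.1
    have hbdd : BddAbove S := (bddAbove_Icc).mono hSb
    have hne : S.Nonempty := ⟨a, mem_insert _ _⟩
    refine ⟨sSup S, ⟨le_csSup hbdd (mem_insert _ _), csSup_le hne fun z hz => (hSb hz).2⟩,
      ?_, ?_⟩
    · intro y hy hyD
      exact le_csSup hbdd (Or.inr ⟨hy, hyD⟩)
    · intro y hy hay hyτ
      obtain ⟨z, hz, hyz⟩ := exists_lt_of_lt_csSup hne hyτ
      rcases hz with rfl | hz
      · exact absurd hyz (not_lt.2 hay.le)
      · exact hlow (hm hy hz.1 hyz.le) hz.2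
  obtain ⟨τf, hτf_mem, hτf_le, hτf_in⟩ := tau_spec f hfc hfm
  obtain ⟨τg, hτg_mem, hτg_le, hτg_in⟩ := tau_spec g hgc hgm
  set t := min τf τg with ht
  set s := max τf τg with hs
  have hts : t ≤ s := min_le_max
  have ht_mem : t ∈ Set.Icc a b := ⟨le_min hτf_mem.1 hτg_mem.1, (min_le_left _ _).trans hτf_mem.2⟩
  have hs_mem : s ∈ Set.Icc a b := ⟨hτf_mem.1.trans (le_max_left _ _), max_le hτf_mem.2 hτg_mem.2⟩
  -- the crucial bound g s - g t ≤ B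
  have hgts : g s - g t ≤ B := by
    rcases eq_or_lt_of_le hts with h | hts'
    · rw [← h]; simpa using hB0
    -- two symmetric cases
    rcases le_total τf τg with hfg | hgf
    · have hts : t = τf := min_eq_left hfg
      have hss : s = τg := max_eq_right hfg
      -- f t ≥ c by right continuity
      have hft : c ≤ f t := by
        have h1 : Tendsto f (𝓝[>] t) (𝓝 (f t)) := (hfc.tendsto t).mono_left nhdsWithin_le_nhds
        have htb : t < b := hts'.trans_le hs_mem.2
        refine ge_of_tendsto h1 ?_
        filter_upwards [Ioc_mem_nhdsGT htb] with z hz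
        by_contra hcon
        push_neg at hcon
        have : f z ∈ D := hD1 hcon
        have := hτf_le z ⟨ht_mem.1.trans hz.1.le, hz.2⟩ this
        rw [hts] at hz; exact absurd this (not_le.2 hz.1)
      -- g s ≤ c by left continuity
      have hgs : g s ≤ c := by
        have h1 : Tendsto g (𝓝[<] s) (𝓝 (g s)) := (hgc.tendsto s).mono_left nhdsWithin_le_nhds
        refine le_of_tendsto h1 ?_
        filter_upwards [Ioo_mem_nhdsLT hts'] with z hz
        have haz : a < z := lt_of_le_of_lt ht_mem.1 hz.1
        have hzmem : z ∈ Set.Icc a b := ⟨haz.le, hz.2.le.trans hs_mem.2⟩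
        have : g z ∈ D := by rw [hss] at hz; exact hτg_in z hzmem haz hz.2
        exact hD2 this
      have := hB t ht_mem
      have h2 : g t ≥ f t - B := by rw [abs_le] at this; linarith
      linarith
    · have hts : t = τg := min_eq_right hgf
      have hss : s = τf := max_eq_left hgf
      have hgt : c ≤ g t := by
        have h1 : Tendsto g (𝓝[>] t) (𝓝 (g t)) := (hgc.tendsto t).mono_left nhdsWithin_le_nhds
        have htb : t < b := hts'.trans_le hs_mem.2
        refine ge_of_tendsto h1 ?_
        filter_upwards [Ioc_mem_nhdsGT htb] with z hz
        by_contra hcon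
        push_neg at hcon
        have : g z ∈ D := hD1 hcon
        have := hτg_le z ⟨ht_mem.1.trans hz.1.le, hz.2⟩ this
        rw [hts] at hz; exact absurd this (not_le.2 hz.1)
      have hfs : f s ≤ c := by
        have h1 : Tendsto f (𝓝[<] s) (𝓝 (f s)) := (hfc.tendsto s).mono_left nhdsWithin_le_nhds
        refine le_of_tendsto h1 ?_
        filter_upwards [Ioo_mem_nhdsLT hts'] with z hz
        have haz : a < z := lt_of_le_of_lt ht_mem.1 hz.1
        have hzmem : z ∈ Set.Icc a b := ⟨haz.le, hz.2.le.trans hs_mem.2⟩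
        have : f z ∈ D := by rw [hss] at hz; exact hτf_in z hzmem haz hz.2
        exact hD2 this
      have := hB s hs_mem
      have h2 : g s ≤ f s + B := by rw [abs_le] at this; linarith
      linarith
  -- integrability facts
  have hgderiv : Continuous (deriv g) := hg.continuous_deriv le_rfl
  have hmeas1 : Measurable fun y => |D.indicator (fun _ => (1:ℝ)) (f y) -
      D.indicator (fun _ => (1:ℝ)) (g y)| * |deriv g y| := by
    apply Measurable.mul
    · exact (((measurable_one.indicator hDm).comp hfc.measurable).sub
        ((measurable_one.indicator hDm).comp hgc.measurable)).abs
    · exact hgderiv.measurable.abs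
  have hint2 : IntegrableOn (fun y => |deriv g y|) (Set.Icc a b) :=
    hgderiv.abs.integrableOn_Icc
  have hind_le_one : ∀ z : ℝ, D.indicator (fun _ => (1:ℝ)) z = 0 ∨
      D.indicator (fun _ => (1:ℝ)) z = 1 := by
    intro z; by_cases hz : z ∈ D <;> simp [Set.indicator_apply, hz]
  have habs_le : ∀ u v : ℝ, (u = 0 ∨ u = 1) → (v = 0 ∨ v = 1) → |u - v| ≤ 1 := by
    rintro u v (rfl | rfl) (rfl | rfl) <;> norm_num
  have hint1 : IntegrableOn (fun y => |D.indicator (fun _ => (1:ℝ)) (f y) -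
      D.indicator (fun _ => (1:ℝ)) (g y)| * |deriv g y|) (Set.Icc a b) := by
    refine hint2.mono' hmeas1.aestronglyMeasurable ?_
    filter_upwards with y
    rw [Real.norm_eq_abs, abs_mul, abs_abs, abs_abs]
    calc |D.indicator (fun _ => (1:ℝ)) (f y) - D.indicator (fun _ => (1:ℝ)) (g y)| * |deriv g y|
        ≤ 1 * |deriv g y| := by
          apply mul_le_mul_of_nonneg_right (habs_le _ _ (hind_le_one _) (hind_le_one _))
            (abs_nonneg _)
      _ = |deriv g y| := one_mul _
  -- pointwise a.e. bound by indicator of Ioc t s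
  have hpt : ∀ᵐ y ∂(volume : Measure ℝ), y ∈ Set.Icc a b →
      |D.indicator (fun _ => (1:ℝ)) (f y) - D.indicator (fun _ => (1:ℝ)) (g y)| * |deriv g y|
      ≤ (Set.Ioc t s).indicator (fun y => |deriv g y|) y := by
    have hnull : (volume : Measure ℝ) ({a} ∪ {τf} ∪ {τg}) = 0 :=
      ((Set.finite_singleton a |>.union (Set.finite_singleton τf)).union
        (Set.finite_singleton τg)).measure_zero _
    refine eventually_of_mem (compl_mem_ae_iff.2 hnull) ?_
    intro y hyc hy
    simp only [Set.mem_compl_iff, Set.mem_union, Set.mem_singleton_iff, not_or] at hyc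
    obtain ⟨⟨hya, hyτf⟩, hyτg⟩ := hyc
    by_cases hdiff : D.indicator (fun _ => (1:ℝ)) (f y) = D.indicator (fun _ => (1:ℝ)) (g y)
    · rw [hdiff, sub_self, abs_zero, zero_mul]
      exact Set.indicator_nonneg (fun z _ => abs_nonneg _) y
    · have hay : a < y := lt_of_le_of_ne hy.1 (Ne.symm hya)
      have hyIoc : y ∈ Set.Ioc t s := by
        by_cases hfD : f y ∈ D
        · have hgD : g y ∉ D := by
            intro hgD; apply hdiff; simp [Set.indicator_apply, hfD, hgD]
          constructor
          · rcases lt_or_ge t y with h | h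
            · exact h
            · exfalso
              have hyτg' : y < τg := lt_of_le_of_ne (h.trans (min_le_right _ _)) hyτg
              exact hgD (hτg_in y hy hay hyτg')
          · exact (hτf_le y hy hfD).trans (le_max_left _ _)
        · have hgD : g y ∈ D := by
            by_contra hgD; apply hdiff; simp [Set.indicator_apply, hfD, hgD]
          constructor
          · rcases lt_or_ge t y with h | h
            · exact h
            · exfalso
              have hyτf' : y < τf := lt_of_le_of_ne (h.trans (min_le_left _ _)) hyτf
              exact hfD (hτf_in y hy hay hyτf')
          · exact (hτg_le y hy hgD).trans (le_max_right _ _)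
      rw [Set.indicator_of_mem hyIoc]
      calc |D.indicator (fun _ => (1:ℝ)) (f y) - D.indicator (fun _ => (1:ℝ)) (g y)| * |deriv g y|
          ≤ 1 * |deriv g y| := mul_le_mul_of_nonneg_right
            (habs_le _ _ (hind_le_one _) (hind_le_one _)) (abs_nonneg _)
        _ = |deriv g y| := one_mul _
  have hIocsub : Set.Ioc t s ⊆ Set.Icc a b := fun z hz =>
    ⟨ht_mem.1.trans hz.1.le, hz.2.trans hs_mem.2⟩
  have hint3 : IntegrableOn ((Set.Ioc t s).indicator fun y => |deriv g y|) (Set.Icc a b) := by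
    apply (hint2.mono' ?_ ?_)
    · exact (hgderiv.measurable.abs.indicator measurableSet_Ioc).aestronglyMeasurable
    · filter_upwards with y
      rw [Real.norm_eq_abs]
      by_cases hy : y ∈ Set.Ioc t s <;>
        simp [Set.indicator_apply, hy, abs_nonneg, abs_abs, le_refl]
  calc ∫ y in Set.Icc a b,
        |D.indicator (fun _ => (1:ℝ)) (f y) - D.indicator (fun _ => (1:ℝ)) (g y)| * |deriv g y|
      ≤ ∫ y in Set.Icc a b, (Set.Ioc t s).indicator (fun y => |deriv g y|) y :=
        setIntegral_mono_on_ae hint1 hint3 measurableSet_Icc hpt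
    _ = ∫ y in Set.Ioc t s, |deriv g y| := by
        rw [setIntegral_indicator measurableSet_Ioc,
          Set.inter_eq_self_of_subset_right hIocsub]
    _ = ∫ y in Set.Ioo t s, |deriv g y| := integral_Ioc_eq_integral_Ioo
    _ = ∫ y in Set.Ioo t s, deriv g y := by
        apply setIntegral_congr_fun measurableSet_Ioo
        intro z hz
        have hz' : z ∈ Set.Ioo a b :=
          ⟨lt_of_le_of_lt ht_mem.1 hz.1, lt_of_lt_of_le hz.2 hs_mem.2⟩
        exact abs_of_nonneg (my_deriv_nonneg (hg.differentiable one_ne_zero).differentiableAt hgm hz')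
    _ = ∫ y in Set.Ioc t s, deriv g y := integral_Ioc_eq_integral_Ioo.symm
    _ = g s - g t := by
        rw [← intervalIntegral.integral_of_le hts]
        exact intervalIntegral.integral_deriv_eq_sub
          (fun z _ => (hg.differentiable one_ne_zero).differentiableAt)
          (hgderiv.intervalIntegrable t s)
    _ ≤ B := hgts

lemma intT (a b : ℝ) (f g : ℝ → ℝ) (hfc : Continuous f) (hgc : Continuous g)
    (hgd : Continuous (deriv g)) (D : Set ℝ) (hDm : MeasurableSet D) :
    IntegrableOn (fun y => |D.indicator (fun _ => (1:ℝ)) (f y) -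
      D.indicator (fun _ => (1:ℝ)) (g y)| * |deriv g y|) (Set.Icc a b) := by
  have hmeas : Measurable fun y => |D.indicator (fun _ => (1:ℝ)) (f y) -
      D.indicator (fun _ => (1:ℝ)) (g y)| * |deriv g y| :=
    ((((measurable_one.indicator hDm).comp hfc.measurable).sub
      ((measurable_one.indicator hDm).comp hgc.measurable)).abs).mul hgd.measurable.abs
  refine (hgd.abs.integrableOn_Icc).mono' hmeas.aestronglyMeasurable ?_
  filter_upwards with y
  rw [Real.norm_eq_abs, abs_mul, abs_abs, abs_abs]
  have h1 : ∀ z : ℝ, D.indicator (fun _ => (1:ℝ)) z = 0 ∨ D.indicator (fun _ => (1:ℝ)) z = 1 := by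
    intro z; by_cases hz : z ∈ D <;> simp [Set.indicator_apply, hz]
  have h2 : |D.indicator (fun _ => (1:ℝ)) (f y) - D.indicator (fun _ => (1:ℝ)) (g y)| ≤ 1 := by
    rcases h1 (f y) with h | h <;> rcases h1 (g y) with h' | h' <;> rw [h, h'] <;> norm_num
  calc |D.indicator (fun _ => (1:ℝ)) (f y) - D.indicator (fun _ => (1:ℝ)) (g y)| * |deriv g y|
      ≤ 1 * |deriv g y| := mul_le_mul_of_nonneg_right h2 (abs_nonneg _)
    _ = |deriv g y| := one_mul _


end Helpers

open Set Filter Topology in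
theorem stmt_18 (p : ℕ) (hp : 0 < p) (f g : ℝ → ℝ)
    (hf : ContDiff ℝ 1 f) (hg : ContDiff ℝ 1 g)
    (hfm : MonotoneOn f (Set.Icc (-1 : ℝ) (2 * p - 1)))
    (hgm : MonotoneOn g (Set.Icc (-1 : ℝ) (2 * p - 1)))
    (x B : ℝ)
    (hB : ∀ y ∈ Set.Icc (-1 : ℝ) (2 * p - 1), |f y - g y| ≤ B)
    (χ : ℝ → ℝ) (hχ : χ = Set.indicator (Set.Icc (-1 : ℝ) x) fun _ => (1 : ℝ)) :
    ∫ y in Set.Icc (-1 : ℝ) (2 * p - 1), |χ (f y) * deriv f y - χ (g y) * deriv g y| ≤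
      2 * B + ∫ y in Set.Icc (-1 : ℝ) (2 * p - 1), |deriv f y - deriv g y| := by
  have hp1 : (1 : ℝ) ≤ (p : ℝ) := by exact_mod_cast hp
  set a : ℝ := -1 with ha
  set b : ℝ := 2 * p - 1 with hb
  have hab : a < b := by rw [ha, hb]; linarith
  have hB0 : 0 ≤ B := le_trans (abs_nonneg _) (hB a ⟨le_rfl, hab.le⟩)
  have hfc : Continuous f := hf.continuous
  have hgc : Continuous g := hg.continuous
  have hfd : Continuous (deriv f) := hf.continuous_deriv le_rfl
  have hgd : Continuous (deriv g) := hg.continuous_deriv le_rfl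
  have hIntDiff : IntegrableOn (fun y => |deriv f y - deriv g y|) (Set.Icc a b) :=
    ((hfd.sub hgd).abs).integrableOn_Icc
  have hIntNonneg : 0 ≤ ∫ y in Set.Icc a b, |deriv f y - deriv g y| :=
    integral_nonneg fun y => abs_nonneg _
  by_cases hx : x < -1
  · -- χ is identically 0
    have hempty : Set.Icc (-1 : ℝ) x = ∅ := Set.Icc_eq_empty (not_le.2 hx)
    have hzero : ∀ t, χ t = 0 := by intro t; rw [hχ, hempty, Set.indicator_empty]
    have : ∀ y, |χ (f y) * deriv f y - χ (g y) * deriv g y| = 0 := by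
      intro y; rw [hzero, hzero]; simp
    rw [show (fun y => |χ (f y) * deriv f y - χ (g y) * deriv g y|) = fun _ => (0:ℝ) from
      funext this]
    rw [integral_zero]
    linarith
  · push_neg at hx
    set i1 : ℝ → ℝ := (Set.Iic x).indicator (fun _ => (1:ℝ)) with hi1
    set i2 : ℝ → ℝ := (Set.Iio (-1:ℝ)).indicator (fun _ => (1:ℝ)) with hi2
    have hrep : ∀ t, χ t = i1 t - i2 t := by
      intro t
      have e : χ t = if -1 ≤ t ∧ t ≤ x then (1:ℝ) else 0 := by
        rw [hχ]; simp [Set.indicator_apply, Set.mem_Icc, ha]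
      have e1 : i1 t = if t ≤ x then (1:ℝ) else 0 := by
        simp [hi1, Set.indicator_apply]
      have e2 : i2 t = if t < -1 then (1:ℝ) else 0 := by
        simp [hi2, Set.indicator_apply]
      rw [e, e1, e2]
      by_cases h2 : t < -1
      · by_cases h1 : t ≤ x
        · rw [if_neg (fun h => absurd h.1 (not_le.2 h2)), if_pos h1, if_pos h2]; norm_num
        · linarith
      · have h2' : -1 ≤ t := not_lt.mp h2
        by_cases h1 : t ≤ x
        · rw [if_pos ⟨h2', h1⟩, if_pos h1, if_neg h2]; norm_num
        · rw [if_neg (fun h => h1 h.2), if_neg h1, if_neg h2]; norm_num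
    have hχval : ∀ t, χ t = 0 ∨ χ t = 1 := by
      intro t; rw [hχ]; by_cases h : t ∈ Set.Icc (-1:ℝ) x <;> simp [Set.indicator_apply, h, ha]
    -- pointwise bound
    have hpt : ∀ y, |χ (f y) * deriv f y - χ (g y) * deriv g y| ≤
        |deriv f y - deriv g y| + (|i1 (f y) - i1 (g y)| * |deriv g y| +
          |i2 (f y) - i2 (g y)| * |deriv g y|) := by
      intro y
      have e1 : χ (f y) * deriv f y - χ (g y) * deriv g y =
          χ (f y) * (deriv f y - deriv g y) + (χ (f y) - χ (g y)) * deriv g y := by ring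
      have hχabs : |χ (f y)| ≤ 1 := by
        rcases hχval (f y) with h | h <;> rw [h] <;> norm_num
      have hsplit : |χ (f y) - χ (g y)| ≤ |i1 (f y) - i1 (g y)| + |i2 (f y) - i2 (g y)| := by
        rw [hrep (f y), hrep (g y)]
        have : i1 (f y) - i2 (f y) - (i1 (g y) - i2 (g y)) =
            (i1 (f y) - i1 (g y)) - (i2 (f y) - i2 (g y)) := by ring
        rw [this]
        exact abs_sub _ _
      calc |χ (f y) * deriv f y - χ (g y) * deriv g y|
          = |χ (f y) * (deriv f y - deriv g y) + (χ (f y) - χ (g y)) * deriv g y| := by rw [e1]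
        _ ≤ |χ (f y) * (deriv f y - deriv g y)| + |(χ (f y) - χ (g y)) * deriv g y| :=
            abs_add_le _ _
        _ = |χ (f y)| * |deriv f y - deriv g y| + |χ (f y) - χ (g y)| * |deriv g y| := by
            rw [abs_mul, abs_mul]
        _ ≤ 1 * |deriv f y - deriv g y| +
            (|i1 (f y) - i1 (g y)| + |i2 (f y) - i2 (g y)|) * |deriv g y| := by
            exact add_le_add (mul_le_mul_of_nonneg_right hχabs (abs_nonneg _))
              (mul_le_mul_of_nonneg_right hsplit (abs_nonneg _))
        _ = |deriv f y - deriv g y| + (|i1 (f y) - i1 (g y)| * |deriv g y| +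
            |i2 (f y) - i2 (g y)| * |deriv g y|) := by ring
    -- integrability
    have hT1 : IntegrableOn (fun y => |i1 (f y) - i1 (g y)| * |deriv g y|) (Set.Icc a b) :=
      intT a b f g hfc hgc hgd _ measurableSet_Iic
    have hT2 : IntegrableOn (fun y => |i2 (f y) - i2 (g y)| * |deriv g y|) (Set.Icc a b) :=
      intT a b f g hfc hgc hgd _ measurableSet_Iio
    have hL : IntegrableOn (fun y => |χ (f y) * deriv f y - χ (g y) * deriv g y|)
        (Set.Icc a b) := by
      have hmeas : Measurable fun y => |χ (f y) * deriv f y - χ (g y) * deriv g y| := by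
        rw [hχ]
        exact ((((measurable_one.indicator measurableSet_Icc).comp hfc.measurable).mul
          hfd.measurable).sub
          (((measurable_one.indicator measurableSet_Icc).comp hgc.measurable).mul
          hgd.measurable)).abs
      refine ((hfd.abs.add hgd.abs).integrableOn_Icc).mono' hmeas.aestronglyMeasurable ?_
      filter_upwards with y
      rw [Real.norm_eq_abs, abs_abs]
      have hf1 : |χ (f y)| ≤ 1 := by rcases hχval (f y) with h | h <;> rw [h] <;> norm_num
      have hg1 : |χ (g y)| ≤ 1 := by rcases hχval (g y) with h | h <;> rw [h] <;> norm_num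
      calc |χ (f y) * deriv f y - χ (g y) * deriv g y|
          ≤ |χ (f y) * deriv f y| + |χ (g y) * deriv g y| := abs_sub _ _
        _ = |χ (f y)| * |deriv f y| + |χ (g y)| * |deriv g y| := by rw [abs_mul, abs_mul]
        _ ≤ 1 * |deriv f y| + 1 * |deriv g y| := by
            exact add_le_add (mul_le_mul_of_nonneg_right hf1 (abs_nonneg _))
              (mul_le_mul_of_nonneg_right hg1 (abs_nonneg _))
        _ = |deriv f y| + |deriv g y| := by ring
    have hkey1 : ∫ y in Set.Icc a b, |i1 (f y) - i1 (g y)| * |deriv g y| ≤ B :=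
      key a b hab f g hf hg hfm hgm x B hB0 hB (Set.Iic x) Set.Iio_subset_Iic_self
        subset_rfl measurableSet_Iic
    have hkey2 : ∫ y in Set.Icc a b, |i2 (f y) - i2 (g y)| * |deriv g y| ≤ B :=
      key a b hab f g hf hg hfm hgm (-1) B hB0 hB (Set.Iio (-1)) subset_rfl
        Set.Iio_subset_Iic_self measurableSet_Iio
    calc ∫ y in Set.Icc a b, |χ (f y) * deriv f y - χ (g y) * deriv g y|
        ≤ ∫ y in Set.Icc a b, (|deriv f y - deriv g y| + (|i1 (f y) - i1 (g y)| * |deriv g y| +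
            |i2 (f y) - i2 (g y)| * |deriv g y|)) :=
          integral_mono hL (hIntDiff.add (hT1.add hT2)) hpt
      _ = (∫ y in Set.Icc a b, |deriv f y - deriv g y|) +
          ((∫ y in Set.Icc a b, |i1 (f y) - i1 (g y)| * |deriv g y|) +
           (∫ y in Set.Icc a b, |i2 (f y) - i2 (g y)| * |deriv g y|)) := by
          exact (integral_add hIntDiff (hT1.add hT2)).trans
            (by rw [integral_add' hT1 hT2])
      _ ≤ (∫ y in Set.Icc a b, |deriv f y - deriv g y|) + (B + B) := by
          gcongr
      _ = 2 * B + ∫ y in Set.Icc a b, |deriv f y - deriv g y| := by ring
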